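/- Let μ be a compactly supported probability measure on ℝ that is not a point mass. For z = a₀ + i v in the open upper half-plane with ∫ dμ(x)/((a₀-x)² + v²) = 1/t, the derivative of the Cauchy transform satisfies the strict bound |G_μ'(z)| < 1/t, where G_μ'(z) = -∫ dμ(x)/(z-x)². -/

import Mathlib

open MeasureTheory

/-- A probability measure giving zero mass to the complement of a point is a Dirac mass. -/
lemma aux_eq_dirac (μ : Measure ℝ) [IsProbabilityMeasure μ] (x₀ : ℝ)
    (h : μ {x₀}ᶜ = 0) : μ = Measure.dirac x₀ := by
  ext s hs
  rw [Measure.dirac_apply' _ hs]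
  by_cases hx : x₀ ∈ s
  · have h1 : μ {x₀} = 1 := by
      have h2 := measure_add_measure_compl (μ := μ) (measurableSet_singleton x₀)
      rw [h, add_zero, measure_univ] at h2
      exact h2
    simp only [Set.indicator_of_mem hx, Pi.one_apply]
    refine le_antisymm prob_le_one ?_
    calc (1 : ENNReal) = μ {x₀} := h1.symm
    _ ≤ μ s := measure_mono (Set.singleton_subset_iff.2 hx)
  · simp only [Set.indicator_of_notMem hx]
    exact measure_mono_null (Set.subset_compl_singleton_iff.2 hx) h

lemma aux_re_eq_abs {w : ℂ} (h : w.re = ‖w‖) : w = (‖w‖ : ℂ) := by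
  have him : w.im = 0 := by
    have h1 : (‖w‖) ^ 2 = w.re ^ 2 + w.im ^ 2 := by
      rw [Complex.sq_norm, Complex.normSq_apply]; ring
    have h0 : w.re ^ 2 = ‖w‖ ^ 2 := by rw [h]
    have h2 : w.im ^ 2 = 0 := by linarith
    exact (pow_eq_zero_iff two_ne_zero).1 h2
  apply Complex.ext <;> simp [him, ← h]

/-- Injectivity: if `(z-x)² = c/rx` and `(z-y)² = c/ry` with `rx, ry > 0`, then `x = y`. -/
lemma aux_inj (a₀ v : ℝ) (hv : 0 < v) (c : ℂ) (hc : c ≠ 0) (x y rx ry : ℝ)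
    (hrx : 0 < rx) (hry : 0 < ry)
    (hx : ((a₀ : ℂ) + v * Complex.I - (x : ℂ)) ^ 2 = c / rx)
    (hy : ((a₀ : ℂ) + v * Complex.I - (y : ℂ)) ^ 2 = c / ry) : x = y := by
  set z : ℂ := (a₀ : ℂ) + v * Complex.I with hz
  have himx : (z - (x : ℂ)).im = v := by simp [hz]
  have himy : (z - (y : ℂ)).im = v := by simp [hz]
  have hzy : z - (y : ℂ) ≠ 0 := fun h0 => by simp [h0] at himy; linarith
  set w : ℂ := (z - (x : ℂ)) / (z - (y : ℂ)) with hw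
  have hw2 : w ^ 2 = ((rx⁻¹ * ry : ℝ) : ℂ) := by
    rw [hw, div_pow, hx, hy, div_div_div_comm, div_self hc, one_div_div]
    push_cast
    ring
  have hre : (w ^ 2).re = rx⁻¹ * ry := by rw [hw2]; simp
  have him : (w ^ 2).im = 0 := by rw [hw2]; simp
  rw [pow_two, Complex.mul_im] at him
  rw [pow_two, Complex.mul_re] at hre
  have hwim : w.im = 0 := by
    by_contra hne
    have hwre : w.re = 0 := by
      rcases mul_eq_zero.1 (by linarith : w.re * w.im = 0) with h | h
      · exact h
      · exact absurd h hne
    rw [hwre] at hre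
    nlinarith [mul_pos (inv_pos.2 hrx) hry, sq_nonneg w.im]
  have hzx : z - (x : ℂ) = w * (z - (y : ℂ)) := by rw [hw, div_mul_cancel₀ _ hzy]
  have him2 : v = w.re * v := by
    have := congrArg Complex.im hzx
    rwa [himx, Complex.mul_im, hwim, himy, zero_mul, add_zero] at this
  have hwre1 : w.re = 1 := by
    rcases mul_eq_zero.1 (show (w.re - 1) * v = 0 by linarith) with h | h
    · linarith
    · exact absurd h (ne_of_gt hv)
  have hweq : w = 1 := by apply Complex.ext <;> simp [hwre1, hwim]
  rw [hweq, one_mul] at hzx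
  have : (x : ℂ) = (y : ℂ) := by
    have := sub_right_injective hzx
    exact this
  exact_mod_cast this

/-- For `μ` compactly supported, not a point mass, and `z = a₀ + iv` with
`v > 0` satisfying `∫ dμ(x)/((a₀-x)²+v²) = 1/t`, one has `|G_μ'(z)| < 1/t` where
`G_μ'(z) = -∫ dμ(x)/(z-x)²`. -/
theorem stmt_3 (μ : Measure ℝ) [IsProbabilityMeasure μ]
    (K : Set ℝ) (hK : IsCompact K) (hμK : μ Kᶜ = 0)
    (hnd : ∀ c : ℝ, μ ≠ Measure.dirac c)
    (t a₀ v : ℝ) (ht : 0 < t) (hv : 0 < v)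
    (hint : ∫ x, 1 / ((a₀ - x) ^ 2 + v ^ 2) ∂μ = 1 / t) :
    ‖-∫ x, (((a₀ : ℂ) + v * Complex.I - (x : ℂ)) ^ 2)⁻¹ ∂μ‖ < 1 / t := by
  set z : ℂ := (a₀ : ℂ) + v * Complex.I with hzdef
  set f : ℝ → ℂ := fun x => ((z - (x : ℂ)) ^ 2)⁻¹ with hfdef
  have hzx : ∀ x : ℝ, z - (x : ℂ) ≠ 0 := by
    intro x h0
    have : (z - (x : ℂ)).im = v := by simp [hzdef]
    rw [h0] at this; simp at this; linarith
  have hfx : ∀ x : ℝ, f x ≠ 0 := fun x => inv_ne_zero (pow_ne_zero _ (hzx x))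
  have hnorm : ∀ x : ℝ, ‖f x‖ = 1 / ((a₀ - x) ^ 2 + v ^ 2) := by
    intro x
    rw [hfdef]
    simp only [norm_inv, norm_pow]
    rw [one_div]
    congr 1
    rw [Complex.sq_norm, Complex.normSq_apply]
    simp only [hzdef]
    simp
    ring
  have hcont : Continuous f := by
    apply Continuous.inv₀
    · exact (Continuous.sub continuous_const Complex.continuous_ofReal).pow 2
    · exact fun x => pow_ne_zero _ (hzx x)
  have hmeas := hcont.aestronglyMeasurable (μ := μ)
  have haeK : ∀ᵐ x ∂μ, x ∈ K := by
    rw [ae_iff]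
    exact hμK
  obtain ⟨C, hC⟩ : ∃ C, ∀ y ∈ (fun x => ‖f x‖) '' K, y ≤ C := by
    obtain ⟨C, hC⟩ := (hK.image (continuous_norm.comp hcont)).bddAbove
    exact ⟨C, fun y hy => hC hy⟩
  have hfi : Integrable f μ := by
    refine Integrable.mono' (integrable_const C) hmeas ?_
    filter_upwards [haeK] with x hx
    exact hC _ ⟨x, hx, rfl⟩
  have hfi' : Integrable (fun x => ‖f x‖) μ := hfi.norm
  have hintnorm : ∫ x, ‖f x‖ ∂μ = 1 / t := by
    rw [← hint]
    exact integral_congr_ae (Filter.Eventually.of_forall fun x => hnorm x)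
  rw [norm_neg]
  have hle : ‖∫ x, f x ∂μ‖ ≤ ∫ x, ‖f x‖ ∂μ := norm_integral_le_integral_norm f
  rcases hle.lt_or_eq with hlt | heq
  · rw [← hintnorm]
    exact hlt
  · exfalso
    set I₀ : ℂ := ∫ x, f x ∂μ with hI₀def
    have hI₀norm : ‖I₀‖ = 1 / t := by rw [heq, hintnorm]
    have hI₀ne : I₀ ≠ 0 := by
      intro h0
      rw [h0, norm_zero] at hI₀norm
      have : (0:ℝ) < 1 / t := by positivity
      linarith
    set c : ℂ := (‖I₀‖ : ℂ) / I₀ with hcdef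
    have hcI : c * I₀ = (‖I₀‖ : ℂ) := by rw [hcdef, div_mul_cancel₀ _ hI₀ne]
    have hcnorm : ‖c‖ = 1 := by
      rw [hcdef, norm_div, Complex.norm_real, norm_norm, div_self (norm_ne_zero_iff.2 hI₀ne)]
    have hcne : c ≠ 0 := by
      intro h0; rw [h0, norm_zero] at hcnorm; linarith
    have hfic : Integrable (fun x => c * f x) μ := hfi.const_mul c
    have hfir : Integrable (fun x => (c * f x).re) μ := hfic.re
    have h1 : ∫ x, (c * f x).re ∂μ = ‖I₀‖ := by
      have h0 := integral_re hfic
      simp only [RCLike.re_to_complex] at h0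
      rw [h0, integral_const_mul, ← hI₀def, hcI]
      simp
    have h2 : ∀ x, (c * f x).re ≤ ‖f x‖ := by
      intro x
      calc (c * f x).re ≤ ‖c * f x‖ := Complex.re_le_norm _
      _ = ‖c‖ * ‖f x‖ := by rw [norm_mul]
      _ = ‖f x‖ := by rw [hcnorm, one_mul]
    have h3 : ∫ x, (‖f x‖ - (c * f x).re) ∂μ = 0 := by
      rw [integral_sub hfi' hfir, h1, ← heq]
      simp
    have h4 : (fun x => ‖f x‖ - (c * f x).re) =ᵐ[μ] 0 := by
      refine (MeasureTheory.integral_eq_zero_iff_of_nonneg (f := fun x => ‖f x‖ - (c * f x).re) ?_ (hfi'.sub hfir)).1 h3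
      exact fun x => sub_nonneg.2 (h2 x)
    have h5 : ∀ᵐ (x : ℝ) ∂μ, (z - (x : ℂ)) ^ 2 = c / (‖f x‖ : ℂ) := by
      filter_upwards [h4] with x hx
      have hre : (c * f x).re = ‖f x‖ := by
        have : ‖f x‖ - (c * f x).re = 0 := hx
        linarith
      have habs : ‖c * f x‖ = ‖f x‖ := by
        rw [norm_mul, hcnorm, one_mul]
      have heq2 : c * f x = (‖f x‖ : ℂ) := by
        have := aux_re_eq_abs (w := c * f x) (by rw [habs, hre])
        rwa [habs] at this
      have hfx' : f x = (‖f x‖ : ℂ) / c := by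
        field_simp at heq2 ⊢
        linear_combination heq2
      have hfnz : (‖f x‖ : ℂ) ≠ 0 := by
        exact_mod_cast Complex.ofReal_ne_zero.2 (norm_ne_zero_iff.2 (hfx x))
      rw [hfdef] at hfx'
      simp only at hfx'
      rw [inv_eq_iff_eq_inv] at hfx'
      rw [hfx', inv_div]
    haveI : (ae μ).NeBot := ae_neBot.2 (IsProbabilityMeasure.ne_zero μ)
    obtain ⟨x₀, hx₀⟩ := h5.exists
    have h6 : ∀ᵐ x ∂μ, x = x₀ := by
      filter_upwards [h5] with x hx
      exact aux_inj a₀ v hv c hcne x x₀ ‖f x‖ ‖f x₀‖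
        (norm_pos_iff.2 (hfx x)) (norm_pos_iff.2 (hfx x₀)) hx hx₀
    have h7 : μ {x₀}ᶜ = 0 := by
      rw [ae_iff] at h6
      exact h6
    exact hnd x₀ (aux_eq_dirac μ x₀ h7)
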